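/- The Jacobian of the cyclic vector field at (1/3,1/3,1/3), computed in the coordinates (x_1,x_2) with x_3 = 1 − x_1 − x_2, is the 2×2 matrix [[β/2 − 1, β/2], [−β/2, −1]], whose eigenvalues are (β/4 − 1) ± i·(√3·β)/4. -/

import Mathlib

noncomputable def G₁ (β x₁ x₂ : ℝ) : ℝ :=
  (x₁ ^ β + x₂ ^ β) / (2 * (x₁ ^ β + x₂ ^ β + (1 - x₁ - x₂) ^ β)) - x₁

noncomputable def G₂ (β x₁ x₂ : ℝ) : ℝ :=
  (x₂ ^ β + (1 - x₁ - x₂) ^ β) / (2 * (x₁ ^ β + x₂ ^ β + (1 - x₁ - x₂) ^ β)) - x₂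

theorem cyclic_jacobian_and_eigenvalues (β : ℝ) (hβ : 0 < β) :
    deriv (fun t => G₁ β t (1/3)) (1/3) = β / 2 - 1 ∧
    deriv (fun t => G₁ β (1/3) t) (1/3) = β / 2 ∧
    deriv (fun t => G₂ β t (1/3)) (1/3) = -(β / 2) ∧
    deriv (fun t => G₂ β (1/3) t) (1/3) = -1 ∧
    (∀ μ : ℂ,
      Matrix.det (μ • (1 : Matrix (Fin 2) (Fin 2) ℂ) -
        Matrix.of ![![(β : ℂ) / 2 - 1, (β : ℂ) / 2], ![-((β : ℂ) / 2), -1]]) = 0 ↔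
      μ = ((β : ℂ) / 4 - 1) + Complex.I * (Real.sqrt 3 * β / 4 : ℝ) ∨
      μ = ((β : ℂ) / 4 - 1) - Complex.I * (Real.sqrt 3 * β / 4 : ℝ)) := by
  set a : ℝ := (1/3:ℝ) ^ β with ha
  set b : ℝ := β * (1/3:ℝ) ^ (β - 1) with hb
  have hapos : 0 < a := Real.rpow_pos_of_pos (by norm_num) β
  have hb3 : b = β * (3 * a) := by
    rw [hb, ha, Real.rpow_sub (by norm_num : (0:ℝ) < 1/3), Real.rpow_one]; ring
  have hpow : HasDerivAt (fun t : ℝ => t ^ β) b (1/3) :=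
    Real.hasDerivAt_rpow_const (Or.inl (by norm_num))
  have hinner1 : HasDerivAt (fun t : ℝ => 1 - t - 1/3) (-1) (1/3) := by
    exact (((hasDerivAt_const (1/3:ℝ) (1:ℝ)).sub (hasDerivAt_id (1/3:ℝ))).sub
      (hasDerivAt_const (1/3:ℝ) (1/3:ℝ))).congr_deriv (by norm_num)
  have hinner2 : HasDerivAt (fun t : ℝ => 1 - 1/3 - t) (-1) (1/3) := by
    exact ((hasDerivAt_const (1/3:ℝ) (1 - 1/3:ℝ)).sub (hasDerivAt_id (1/3:ℝ))).congr_deriv (by norm_num)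
  have hcomp1 : HasDerivAt (fun t : ℝ => (1 - t - 1/3) ^ β) (b * (-1)) (1/3) := by
    have h := hinner1.rpow_const (p := β) (Or.inl (by norm_num))
    convert h using 1
    rw [hb]; norm_num
  have hcomp2 : HasDerivAt (fun t : ℝ => (1 - 1/3 - t) ^ β) (b * (-1)) (1/3) := by
    have h := hinner2.rpow_const (p := β) (Or.inl (by norm_num))
    convert h using 1
    rw [hb]; norm_num
  have hc13 : (1 - 1/3 - 1/3 : ℝ) = 1/3 := by norm_num
  refine ⟨?_, ?_, ?_, ?_, ?_⟩
  · -- ∂G₁/∂x₁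
    have hnum : HasDerivAt (fun t : ℝ => t ^ β + (1/3:ℝ) ^ β) b (1/3) := by
      simpa using hpow.add_const ((1/3:ℝ) ^ β)
    have hden : HasDerivAt (fun t : ℝ => 2 * (t ^ β + (1/3:ℝ) ^ β + (1 - t - 1/3) ^ β))
        (2 * (b + b * (-1))) (1/3) := ((hpow.add_const ((1/3:ℝ)^β)).add hcomp1).const_mul 2
    have hden0 : 2 * ((1/3:ℝ) ^ β + (1/3:ℝ) ^ β + (1 - 1/3 - 1/3 : ℝ) ^ β) ≠ 0 := by
      rw [hc13]; positivity
    have hmain := ((hnum.div hden hden0).sub (hasDerivAt_id (1/3:ℝ))).deriv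
    simp only [Pi.sub_def, Pi.div_def, id_eq] at hmain
    rw [show (fun t => G₁ β t (1/3)) = (fun t : ℝ =>
        (t ^ β + (1/3:ℝ) ^ β) / (2 * (t ^ β + (1/3:ℝ) ^ β + (1 - t - 1/3) ^ β)) - t) from rfl,
      hmain, hc13, ← ha]
    field_simp
    rw [hb3]; ring
  · -- ∂G₁/∂x₂
    have hnum : HasDerivAt (fun t : ℝ => (1/3:ℝ) ^ β + t ^ β) b (1/3) := by
      simpa using hpow.const_add ((1/3:ℝ) ^ β)
    have hden : HasDerivAt (fun t : ℝ => 2 * ((1/3:ℝ) ^ β + t ^ β + (1 - 1/3 - t) ^ β))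
        (2 * (b + b * (-1))) (1/3) := ((hpow.const_add ((1/3:ℝ)^β)).add hcomp2).const_mul 2
    have hden0 : 2 * ((1/3:ℝ) ^ β + (1/3:ℝ) ^ β + (1 - 1/3 - 1/3 : ℝ) ^ β) ≠ 0 := by
      rw [hc13]; positivity
    have hmain := ((hnum.div hden hden0).sub_const (1/3:ℝ)).deriv
    simp only [Pi.sub_def, Pi.div_def, id_eq] at hmain
    rw [show (fun t => G₁ β (1/3) t) = (fun t : ℝ =>
        ((1/3:ℝ) ^ β + t ^ β) / (2 * ((1/3:ℝ) ^ β + t ^ β + (1 - 1/3 - t) ^ β)) - 1/3)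
        from rfl, hmain, hc13, ← ha]
    field_simp
    rw [hb3]; ring
  · -- ∂G₂/∂x₁
    have hnum : HasDerivAt (fun t : ℝ => (1/3:ℝ) ^ β + (1 - t - 1/3) ^ β) (b * (-1)) (1/3) := by
      simpa using hcomp1.const_add ((1/3:ℝ) ^ β)
    have hden : HasDerivAt (fun t : ℝ => 2 * (t ^ β + (1/3:ℝ) ^ β + (1 - t - 1/3) ^ β))
        (2 * (b + b * (-1))) (1/3) := ((hpow.add_const ((1/3:ℝ)^β)).add hcomp1).const_mul 2
    have hden0 : 2 * ((1/3:ℝ) ^ β + (1/3:ℝ) ^ β + (1 - 1/3 - 1/3 : ℝ) ^ β) ≠ 0 := by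
      rw [hc13]; positivity
    have hmain := ((hnum.div hden hden0).sub_const (1/3:ℝ)).deriv
    simp only [Pi.sub_def, Pi.div_def, id_eq] at hmain
    rw [show (fun t => G₂ β t (1/3)) = (fun t : ℝ =>
        ((1/3:ℝ) ^ β + (1 - t - 1/3) ^ β) /
          (2 * (t ^ β + (1/3:ℝ) ^ β + (1 - t - 1/3) ^ β)) - 1/3) from rfl,
      hmain, hc13, ← ha]
    field_simp
    rw [hb3]; ring
  · -- ∂G₂/∂x₂
    have hnum : HasDerivAt (fun t : ℝ => t ^ β + (1 - 1/3 - t) ^ β) (b + b * (-1)) (1/3) :=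
      hpow.add hcomp2
    have hden : HasDerivAt (fun t : ℝ => 2 * ((1/3:ℝ) ^ β + t ^ β + (1 - 1/3 - t) ^ β))
        (2 * (b + b * (-1))) (1/3) := ((hpow.const_add ((1/3:ℝ)^β)).add hcomp2).const_mul 2
    have hden0 : 2 * ((1/3:ℝ) ^ β + (1/3:ℝ) ^ β + (1 - 1/3 - 1/3 : ℝ) ^ β) ≠ 0 := by
      rw [hc13]; positivity
    have hmain := ((hnum.div hden hden0).sub (hasDerivAt_id (1/3:ℝ))).deriv
    simp only [Pi.sub_def, Pi.div_def, id_eq] at hmain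
    rw [show (fun t => G₂ β (1/3) t) = (fun t : ℝ =>
        (t ^ β + (1 - 1/3 - t) ^ β) /
          (2 * ((1/3:ℝ) ^ β + t ^ β + (1 - 1/3 - t) ^ β)) - t) from rfl,
      hmain, hc13, ← ha]
    field_simp
    ring
  · -- eigenvalues
    intro μ
    have hI : (Complex.I : ℂ) ^ 2 = -1 := Complex.I_sq
    have hs : ((Real.sqrt 3 : ℝ) : ℂ) ^ 2 = 3 := by
      norm_cast
      exact Real.sq_sqrt (by norm_num)
    set r₁ : ℂ := ((β : ℂ) / 4 - 1) + Complex.I * (Real.sqrt 3 * β / 4 : ℝ) with hr₁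
    set r₂ : ℂ := ((β : ℂ) / 4 - 1) - Complex.I * (Real.sqrt 3 * β / 4 : ℝ) with hr₂
    have key : Matrix.det (μ • (1 : Matrix (Fin 2) (Fin 2) ℂ) -
          Matrix.of ![![(β : ℂ) / 2 - 1, (β : ℂ) / 2], ![-((β : ℂ) / 2), -1]]) =
        (μ - r₁) * (μ - r₂) := by
      rw [Matrix.det_fin_two]
      simp only [Matrix.sub_apply, Matrix.smul_apply, Matrix.one_apply, Matrix.of_apply,
        Matrix.cons_val', Matrix.cons_val_zero, Matrix.cons_val_one, Matrix.head_cons,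
        Matrix.empty_val', Matrix.cons_val_fin_one, Matrix.head_fin_const, smul_eq_mul,
        mul_one, mul_zero]
      rw [hr₁, hr₂]
      push_cast
      linear_combination (((Real.sqrt 3 : ℝ) : ℂ) ^ 2 * (β:ℂ)^2 / 16) * hI -
        ((β:ℂ)^2 / 16) * hs
    rw [key, mul_eq_zero, sub_eq_zero, sub_eq_zero]
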